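/- A quantum Latin square Φ is orthogonal to its conjugate transpose Φ† (with entries conj(Φ_{j,i})) if and only if Φ is orthogonal to its transpose Φᵀ (with entries Φ_{j,i}). -/

import Mathlib

noncomputable section

/-- The inner product on a complex inner product space, as a function into `ℂ`. -/
def ip {E : Type*} [NormedAddCommGroup E] [InnerProductSpace ℂ E] (x y : E) : ℂ :=
  inner ℂ x y

/-- Entrywise complex conjugation of a vector in `ℂ^ι` (in the standard basis). -/
def conjE {ι : Type*} [Fintype ι] (v : EuclideanSpace ℂ ι) : EuclideanSpace ℂ ι :=
  WithLp.toLp 2 (fun k => star (v k))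

/-- A quantum Latin square of dimension `d`: a `d × d` array of vectors in `ℂ^d`
whose rows and columns are orthonormal bases (orthonormal families of `d` vectors
in the `d`-dimensional space `ℂ^d`). -/
def IsQLS {d : ℕ} (Φ : Fin d → Fin d → EuclideanSpace ℂ (Fin d)) : Prop :=
  (∀ i, Orthonormal ℂ (Φ i)) ∧ (∀ j, Orthonormal ℂ (fun i => Φ i j))

/-- Two `d × d` arrays of vectors are orthogonal quantum Latin squares:
`⟨Φ_{i,j},Φ_{i',j'}⟩⟨Ψ_{i,j},Ψ_{i',j'}⟩ = δ_{ii'}δ_{jj'}`, i.e. the tensor products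
`Φ_{i,j} ⊗ Ψ_{i,j}` form an orthonormal basis of `ℂ^d ⊗ ℂ^d`. -/
def OrthQLS {d : ℕ} (Φ Ψ : Fin d → Fin d → EuclideanSpace ℂ (Fin d)) : Prop :=
  ∀ i j i' j', ip (Φ i j) (Φ i' j') * ip (Ψ i j) (Ψ i' j') =
    if i = i' ∧ j = j' then 1 else 0

/-- A self-orthogonal quantum Latin square: a quantum Latin square that is
orthogonal to its conjugate transpose, i.e.
`⟨Φ_{i,j},Φ_{i',j'}⟩ ⋅ conj ⟨Φ_{j,i},Φ_{j',i'}⟩ = δ_{ii'}δ_{jj'}`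
(the vectors `Φ_{i,j} ⊗ conj (Φ_{j,i})` form an orthonormal basis of `ℂ^d ⊗ ℂ^d`). -/
def IsSOQLS {d : ℕ} (Φ : Fin d → Fin d → EuclideanSpace ℂ (Fin d)) : Prop :=
  IsQLS Φ ∧ OrthQLS Φ (fun i j => conjE (Φ j i))


lemma ip_conjE {ι : Type*} [Fintype ι] (u v : EuclideanSpace ℂ ι) :
    ip (conjE u) (conjE v) = ip v u := by
  simp only [ip, conjE, EuclideanSpace.inner_eq_star_dotProduct]
  simp [dotProduct, conjE, mul_comm]

lemma ip_conj {E : Type*} [NormedAddCommGroup E] [InnerProductSpace ℂ E] (x y : E) :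
    ip x y = starRingEnd ℂ (ip y x) := by
  simp [ip]

/-- A quantum Latin square `Φ` is orthogonal to its conjugate transpose `Φ†`
(with entries `conj (Φ_{j,i})`) if and only if it is orthogonal to its transpose `Φᵀ`
(with entries `Φ_{j,i}`). -/
theorem orth_conjTranspose_iff_orth_transpose {d : ℕ}
    (Φ : Fin d → Fin d → EuclideanSpace ℂ (Fin d)) (hΦ : IsQLS Φ) :
    OrthQLS Φ (fun i j => conjE (Φ j i)) ↔ OrthQLS Φ (fun i j => Φ j i) := by
  constructor
  · intro h i j i' j'
    by_cases hc : i = i' ∧ j = j'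
    · obtain ⟨rfl, rfl⟩ := hc
      simpa [ip_conjE] using h i j i j
    · simp only [hc, if_false]
      have h2 := h i' j' i j
      have hc' : ¬ (i' = i ∧ j' = j) := by
        intro ⟨a, b⟩; exact hc ⟨a.symm, b.symm⟩
      simp only [hc', if_false, ip_conjE] at h2
      rw [mul_eq_zero]
      rcases mul_eq_zero.mp h2 with h3 | h3
      · left; rw [ip_conj]; simp [h3]
      · right; exact h3
  · intro h i j i' j'
    simp only [ip_conjE]
    by_cases hc : i = i' ∧ j = j'
    · obtain ⟨rfl, rfl⟩ := hc
      simpa using h i j i j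
    · simp only [hc, if_false]
      have h2 := h i' j' i j
      have hc' : ¬ (i' = i ∧ j' = j) := by
        intro ⟨a, b⟩; exact hc ⟨a.symm, b.symm⟩
      simp only [hc', if_false] at h2
      rw [mul_eq_zero]
      rcases mul_eq_zero.mp h2 with h3 | h3
      · left; rw [ip_conj]; simp [h3]
      · right; exact h3
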